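/- Let w be a weight on ℝⁿ and suppose there exist B, β ≥ 1 and γ > 0 such that C_S^w(α) - 1 ≤ B(1-α)^{1/β} for all α ∈ (1 - e^{-γ}, 1), where C_S^w is the weighted sharp Tauberian constant for the strong maximal operator. Then w satisfies the reverse Hölder inequality ((1/|R|)∫_R w^r)^{1/r} ≤ max(B, e^{γ/β})^{β/r'} ((β'-1)/(β'-r))^{1/r} · (1/|R|)∫_R w for every axis-parallel rectangle R ⊆ ℝⁿ and every 1 < r < β' = β/(β-1). -/

import Mathlib

open MeasureTheory Set
open scoped ENNReal NNReal

/-- The open axis-parallel rectangle (rectangular parallelepiped) determined by `a` and `b`. -/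
def rect {n : ℕ} (a b : Fin n → ℝ) : Set (Fin n → ℝ) :=
  Set.univ.pi fun i => Set.Ioo (a i) (b i)

/-- The strong maximal operator on `ℝⁿ` over axis-parallel rectangles. -/
noncomputable def MS {n : ℕ} (f : (Fin n → ℝ) → ℝ) (x : Fin n → ℝ) : ℝ :=
  sSup {r : ℝ | ∃ a b : Fin n → ℝ, (∀ i, x i ∈ Set.Ioo (a i) (b i)) ∧
    r = (volume (rect a b)).toReal⁻¹ * ∫ y in rect a b, |f y|}

/-- The `w`-measure of a set: `w(S) = ∫_S w`. -/
noncomputable def wInt {n : ℕ} (w : (Fin n → ℝ) → ℝ) (S : Set (Fin n → ℝ)) : ℝ≥0∞ :=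
  ∫⁻ x in S, ENNReal.ofReal (w x)

/-- The weighted sharp Tauberian constant of the strong maximal operator. -/
noncomputable def CSw {n : ℕ} (w : (Fin n → ℝ) → ℝ) (α : ℝ) : ℝ≥0∞ :=
  ⨆ (E : Set (Fin n → ℝ)) (_ : MeasurableSet E) (_ : 0 < wInt w E) (_ : wInt w E < ⊤),
    wInt w {x | α < MS (E.indicator 1) x} / wInt w E

namespace Stmt8
variable {n : ℕ}

lemma measurableSet_rect (a b : Fin n → ℝ) : MeasurableSet (rect a b) :=
  MeasurableSet.univ_pi fun _ => measurableSet_Ioo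

lemma volume_rect (a b : Fin n → ℝ) :
    volume (rect a b) = ∏ i, ENNReal.ofReal (b i - a i) := by
  rw [rect, volume_pi_pi]
  simp [Real.volume_Ioo]

lemma volume_rect_lt_top (a b : Fin n → ℝ) : volume (rect a b) < ⊤ := by
  rw [volume_rect]
  exact ENNReal.prod_lt_top fun i _ => ENNReal.ofReal_lt_top

lemma volume_rect_pos {a b : Fin n → ℝ} (hab : ∀ i, a i < b i) :
    0 < volume (rect a b) := by
  rw [volume_rect]
  exact CanonicallyOrderedAdd.prod_pos.mpr
    fun i _ => ENNReal.ofReal_pos.mpr (sub_pos.mpr (hab i))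

end Stmt8

namespace Stmt8

lemma integral_abs_indicator {E : Set (Fin n → ℝ)} (hE : MeasurableSet E)
    (S : Set (Fin n → ℝ)) :
    ∫ y in S, |E.indicator 1 y| = (volume (E ∩ S)).toReal := by
  have h1 : ∀ y, |E.indicator (1 : (Fin n → ℝ) → ℝ) y| = E.indicator 1 y := by
    intro y
    by_cases h : y ∈ E <;> simp [Set.indicator_apply, h]
  simp_rw [h1]
  rw [MeasureTheory.setIntegral_indicator hE]
  simp [Set.inter_comm, MeasureTheory.setIntegral_const]
  rfl

lemma MS_bddAbove {E : Set (Fin n → ℝ)} (hE : MeasurableSet E) (x : Fin n → ℝ) :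
    BddAbove {r : ℝ | ∃ a b : Fin n → ℝ, (∀ i, x i ∈ Set.Ioo (a i) (b i)) ∧
      r = (volume (rect a b)).toReal⁻¹ * ∫ y in rect a b, |E.indicator 1 y|} := by
  refine ⟨1, fun r hr => ?_⟩
  obtain ⟨a, b, hx, rfl⟩ := hr
  rw [integral_abs_indicator hE]
  have hab : ∀ i, a i < b i := fun i => lt_trans (hx i).1 (hx i).2
  have hv : 0 < (volume (rect a b)).toReal :=
    ENNReal.toReal_pos (volume_rect_pos hab).ne' (volume_rect_lt_top a b).ne
  have hle : (volume (E ∩ rect a b)).toReal ≤ (volume (rect a b)).toReal :=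
    ENNReal.toReal_mono (volume_rect_lt_top a b).ne
      (measure_mono Set.inter_subset_right)
  rw [inv_mul_le_iff₀ hv]
  linarith

lemma MS_ge {a b : Fin n → ℝ} {E : Set (Fin n → ℝ)} (hE : MeasurableSet E)
    {x : Fin n → ℝ} (hx : x ∈ rect a b) :
    (volume (rect a b)).toReal⁻¹ * (volume (E ∩ rect a b)).toReal ≤
      MS (E.indicator 1) x := by
  rw [MS]
  refine le_csSup (MS_bddAbove hE x) ?_
  refine ⟨a, b, fun i => hx i (Set.mem_univ i), ?_⟩
  rw [integral_abs_indicator hE]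

end Stmt8

namespace Stmt8

lemma wInt_mono (w : (Fin n → ℝ) → ℝ) {S T : Set (Fin n → ℝ)} (h : S ⊆ T) :
    wInt w S ≤ wInt w T :=
  lintegral_mono_set h

lemma wInt_eq_withDensity (w : (Fin n → ℝ) → ℝ) {S : Set (Fin n → ℝ)}
    (hS : MeasurableSet S) :
    wInt w S = (volume.withDensity fun x => ENNReal.ofReal (w x)) S :=
  (withDensity_apply _ hS).symm

lemma le_CSw (w : (Fin n → ℝ) → ℝ) (α : ℝ) {E : Set (Fin n → ℝ)}
    (hE : MeasurableSet E) (h0 : 0 < wInt w E) (hfin : wInt w E < ⊤) :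
    wInt w {x | α < MS (E.indicator 1) x} / wInt w E ≤ CSw w α := by
  rw [CSw]
  have h4 : wInt w {x | α < MS (E.indicator 1) x} / wInt w E ≤
      ⨆ (_ : wInt w E < ⊤), wInt w {x | α < MS (E.indicator 1) x} / wInt w E :=
    le_iSup (fun _ => wInt w {x | α < MS (E.indicator 1) x} / wInt w E) hfin
  have h3 := h4.trans (le_iSup (fun _ : 0 < wInt w E =>
      ⨆ (_ : wInt w E < ⊤), wInt w {x | α < MS (E.indicator 1) x} / wInt w E) h0)
  have h2 := h3.trans (le_iSup (fun _ : MeasurableSet E => ⨆ (_ : 0 < wInt w E)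
      (_ : wInt w E < ⊤), wInt w {x | α < MS (E.indicator 1) x} / wInt w E) hE)
  exact h2.trans (le_iSup (fun E => ⨆ (_ : MeasurableSet E) (_ : 0 < wInt w E)
      (_ : wInt w E < ⊤), wInt w {x | α < MS (E.indicator 1) x} / wInt w E) E)

/-- Lemma B : application of the Tauberian hypothesis. -/
lemma tauberian_apply {w : (Fin n → ℝ) → ℝ} {B β γ : ℝ}
    (htaub : ∀ α : ℝ, 1 - Real.exp (-γ) < α → α < 1 →
      CSw w α - 1 ≤ ENNReal.ofReal (B * (1 - α) ^ (1 / β)))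
    {α : ℝ} (hα1 : 1 - Real.exp (-γ) < α) (hα2 : α < 1) (hα0 : 0 < α)
    {a b : Fin n → ℝ} {E : Set (Fin n → ℝ)}
    (hE : MeasurableSet E) (hE0 : 0 < wInt w E) (hEfin : wInt w E < ⊤)
    (hbig : α * (volume (rect a b)).toReal < (volume (E ∩ rect a b)).toReal) :
    wInt w (rect a b) ≤
      (1 + ENNReal.ofReal (B * (1 - α) ^ (1 / β))) * wInt w E := by
  have hvle : (volume (E ∩ rect a b)).toReal ≤ (volume (rect a b)).toReal :=
    ENNReal.toReal_mono (volume_rect_lt_top a b).ne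
      (measure_mono Set.inter_subset_right)
  have hv : 0 < (volume (rect a b)).toReal := by
    by_contra h
    push_neg at h
    have h0 : (volume (rect a b)).toReal = 0 :=
      le_antisymm h ENNReal.toReal_nonneg
    rw [h0, mul_zero] at hbig
    exact absurd hbig (not_lt.mpr (by linarith))
  -- R ⊆ halo
  have hsub : rect a b ⊆ {x | α < MS (E.indicator 1) x} := by
    intro x hx
    have h1 := MS_ge hE hx
    have h2 : α < (volume (rect a b)).toReal⁻¹ * (volume (E ∩ rect a b)).toReal := by
      rw [lt_inv_mul_iff₀ hv, mul_comm]
      exact hbig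
    exact lt_of_lt_of_le h2 h1
  calc wInt w (rect a b) ≤ wInt w {x | α < MS (E.indicator 1) x} := wInt_mono w hsub
    _ ≤ CSw w α * wInt w E := by
        rw [← ENNReal.div_le_iff hE0.ne' hEfin.ne]
        exact le_CSw w α hE hE0 hEfin
    _ ≤ (1 + ENNReal.ofReal (B * (1 - α) ^ (1 / β))) * wInt w E := by
        refine mul_le_mul_left ?_ _
        rw [← tsub_le_iff_left]
        exact htaub α hα1 hα2

end Stmt8

namespace Stmt8

/-- Hyperplanes are `w`-null. -/
lemma wInt_hyperplane (w : (Fin n → ℝ) → ℝ) (i : Fin n) (c : ℝ) :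
    wInt w {x : Fin n → ℝ | x i = c} = 0 := by
  have hvol : volume {x : Fin n → ℝ | x i = c} = 0 := by
    have hsub : {x : Fin n → ℝ | x i = c} ⊆
        ⋃ m : ℕ, Set.univ.pi fun j => if j = i then Set.Icc c c else Set.Icc (-(m:ℝ)) m := by
      intro x hx
      obtain ⟨m, hm⟩ := exists_nat_gt (⨆ j, |x j|)
      refine Set.mem_iUnion.mpr ⟨m, fun j _ => ?_⟩
      by_cases hj : j = i
      · subst hj
        simp only [if_pos rfl]
        exact ⟨hx.ge, hx.le⟩
      · simp only [if_neg hj]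
        have : |x j| < m := lt_of_le_of_lt (le_ciSup (f := fun j => |x j|) (Set.finite_range _).bddAbove j) hm
        constructor <;> [linarith [abs_nonneg (x j), neg_abs_le (x j)]; linarith [le_abs_self (x j)]]
    refine measure_mono_null hsub ?_
    refine measure_iUnion_null fun m => ?_
    rw [volume_pi_pi]
    refine Finset.prod_eq_zero (Finset.mem_univ i) ?_
    simp
  rw [wInt]
  rw [Measure.restrict_eq_zero.mpr hvol]
  simp

/-- Selection of a subset with small positive `w`-measure. -/
lemma exists_small_subset {w : (Fin n → ℝ) → ℝ} (i0 : Fin n)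
    {S : Set (Fin n → ℝ)} (hS : MeasurableSet S) (h0 : 0 < wInt w S)
    (hfin : wInt w S < ⊤) {ε : ℝ≥0∞} (hε : 0 < ε) :
    ∃ T, T ⊆ S ∧ MeasurableSet T ∧ 0 < wInt w T ∧ wInt w T ≤ ε := by
  classical
  set μ : Measure (Fin n → ℝ) := volume.withDensity fun x => ENNReal.ofReal (w x) with hμ
  have hμS : ∀ T : Set (Fin n → ℝ), MeasurableSet T → wInt w T = μ T :=
    fun T hT => wInt_eq_withDensity w hT
  set g : ℝ → Set (Fin n → ℝ) := fun c => S ∩ {x | x i0 < c} with hg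
  have hgm : ∀ c, MeasurableSet (g c) := fun c =>
    hS.inter ((measurable_pi_apply i0) measurableSet_Iio)
  have hgmono : Monotone g := fun c d hcd =>
    Set.inter_subset_inter_right _ (fun x hx => lt_of_lt_of_le hx hcd)
  have hμfin : μ S ≠ ⊤ := by rw [← hμS S hS]; exact hfin.ne
  -- some slice has positive measure
  have hexists : ∃ k : ℕ, 0 < μ (g k) := by
    by_contra h
    push_neg at h
    have hzero : ∀ k : ℕ, μ (g k) = 0 := fun k => le_antisymm (h k) zero_le
    have hunion : (⋃ k : ℕ, g k) = S := by
      ext x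
      simp only [Set.mem_iUnion, hg, Set.mem_inter_iff, Set.mem_setOf_eq]
      constructor
      · rintro ⟨k, hk, _⟩; exact hk
      · intro hx
        obtain ⟨k, hk⟩ := exists_nat_gt (x i0)
        exact ⟨k, hx, hk⟩
    have : μ S = 0 := by
      rw [← hunion]
      exact measure_iUnion_null hzero
    rw [← hμS S hS] at this
    exact absurd this h0.ne'
  -- general helper: a decreasing sequence of slices with null intersection
  have key : ∀ c : ℕ → ℝ, (Antitone c) → (∀ k, 0 < μ (g (c k))) →
      μ (⋂ k, g (c k)) = 0 → ∃ T, T ⊆ S ∧ MeasurableSet T ∧ 0 < wInt w T ∧ wInt w T ≤ ε := by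
    intro c hc hpos hnull
    have htend : Filter.Tendsto (fun k => μ (g (c k))) Filter.atTop (nhds 0) := by
      have := tendsto_measure_iInter_atTop (μ := μ)
        (fun k => (hgm (c k)).nullMeasurableSet)
        (fun j k hjk => hgmono (hc hjk)) ⟨0, ne_top_of_le_ne_top hμfin
          (measure_mono Set.inter_subset_left)⟩
      rwa [hnull] at this
    have hev : ∀ᶠ k in Filter.atTop, μ (g (c k)) < ε :=
      htend.eventually_lt_const hε
    obtain ⟨k, hk⟩ := hev.exists
    refine ⟨g (c k), Set.inter_subset_left, hgm _, ?_, ?_⟩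
    · rw [hμS _ (hgm _)]; exact hpos k
    · rw [hμS _ (hgm _)]; exact hk.le
  by_cases hall : ∀ c : ℝ, 0 < μ (g c)
  · -- no slice is null: push everything to -∞
    refine key (fun k => -(k : ℝ)) (fun j k hjk => neg_le_neg (Nat.cast_le.mpr hjk)) 
      (fun k => hall _) ?_
    have : (⋂ k : ℕ, g (-(k : ℝ))) = ∅ := by
      ext x
      simp only [Set.mem_iInter, Set.mem_empty_iff_false, iff_false, not_forall]
      obtain ⟨k, hk⟩ := exists_nat_gt (-(x i0))
      exact ⟨k, fun hx => absurd hx.2 (by simp only [Set.mem_setOf_eq]; linarith)⟩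
    rw [this]; exact measure_empty
  · push_neg at hall
    obtain ⟨c0, hc0⟩ := hall
    have hc0' : μ (g c0) = 0 := le_antisymm hc0 zero_le
    set P : Set ℝ := {c | 0 < μ (g c)} with hP
    have hPne : P.Nonempty := by
      obtain ⟨k, hk⟩ := hexists
      exact ⟨k, hk⟩
    have hPbdd : BddBelow P := by
      refine ⟨c0, fun c hc => ?_⟩
      by_contra hlt
      push_neg at hlt
      have : μ (g c) ≤ μ (g c0) := measure_mono (hgmono hlt.le)
      rw [hc0'] at this
      exact absurd (le_antisymm this zero_le) hc.ne'
    set cs : ℝ := sInf P with hcs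
    refine key (fun k => cs + 1 / ((k : ℝ) + 1)) ?_ ?_ ?_
    · intro j k hjk
      have : 1 / ((k : ℝ) + 1) ≤ 1 / ((j : ℝ) + 1) := by
        apply one_div_le_one_div_of_le
        · positivity
        · exact_mod_cast add_le_add_left (Nat.cast_le.mpr hjk) 1
      linarith
    · intro k
      have hlt : cs < cs + 1 / ((k : ℝ) + 1) := by
        have : (0:ℝ) < 1 / ((k : ℝ) + 1) := by positivity
        linarith
      obtain ⟨c', hc'P, hc'lt⟩ := exists_lt_of_csInf_lt hPne hlt
      exact lt_of_lt_of_le hc'P (measure_mono (hgmono hc'lt.le))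
    · -- the intersection is S ∩ {x i0 ≤ cs}, which is μ-null
      have hiInter : (⋂ k : ℕ, g (cs + 1 / ((k : ℝ) + 1))) = S ∩ {x | x i0 ≤ cs} := by
        ext x
        simp only [Set.mem_iInter, hg, Set.mem_inter_iff, Set.mem_setOf_eq]
        constructor
        · intro h
          refine ⟨(h 0).1, ?_⟩
          by_contra hgt
          push_neg at hgt
          obtain ⟨k, hk⟩ := exists_nat_one_div_lt (sub_pos.mpr hgt)
          have := (h k).2
          linarith
        · intro hx k
          refine ⟨hx.1, ?_⟩
          have h2 : (0:ℝ) < 1 / ((k : ℝ) + 1) := by positivity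
          have := hx.2
          linarith
      rw [hiInter]
      have hsplit : S ∩ {x | x i0 ≤ cs} ⊆
          (S ∩ {x | x i0 < cs}) ∪ {x | x i0 = cs} := by
        intro x hx
        have hx2 : x i0 ≤ cs := hx.2
        rcases lt_or_eq_of_le hx2 with h | h
        · exact Or.inl ⟨hx.1, h⟩
        · exact Or.inr h
      refine measure_mono_null hsplit (measure_union_null ?_ ?_)
      · have hunion : S ∩ {x | x i0 < cs} = ⋃ k : ℕ, g (cs - 1 / ((k : ℝ) + 1)) := by
          ext x
          simp only [Set.mem_iUnion, hg, Set.mem_inter_iff, Set.mem_setOf_eq]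
          constructor
          · intro ⟨hxS, hxlt⟩
            obtain ⟨k, hk⟩ := exists_nat_one_div_lt (sub_pos.mpr hxlt)
            exact ⟨k, hxS, by linarith⟩
          · rintro ⟨k, hxS, hxlt⟩
            have : (0:ℝ) < 1 / ((k : ℝ) + 1) := by positivity
            exact ⟨hxS, by linarith⟩
        rw [hunion]
        refine measure_iUnion_null fun k => ?_
        have hnotP : cs - 1 / ((k : ℝ) + 1) ∉ P := fun hmem => by
          have := csInf_le hPbdd hmem
          have h2 : (0:ℝ) < 1 / ((k : ℝ) + 1) := by positivity
          rw [← hcs] at this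
          linarith
        simp only [hP, Set.mem_setOf_eq, not_lt] at hnotP
        exact le_antisymm hnotP zero_le
      · have hms : MeasurableSet {x : Fin n → ℝ | x i0 = cs} := by
          have : {x : Fin n → ℝ | x i0 = cs} = (fun x : Fin n → ℝ => x i0) ⁻¹' {cs} := by
            ext x; simp
          rw [this]
          exact (measurable_pi_apply i0) (measurableSet_singleton cs)
        rw [← hμS _ hms]
        exact wInt_hyperplane w i0 cs

end Stmt8

namespace Stmt8

lemma wInt_rect_lt_top {w : (Fin n → ℝ) → ℝ} (hloc : LocallyIntegrable w volume)
    (a b : Fin n → ℝ) : wInt w (rect a b) < ⊤ := by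
  have hsub : rect a b ⊆ Set.Icc a b := by
    intro x hx
    constructor <;> intro i <;>
      [exact (hx i (Set.mem_univ i)).1.le; exact (hx i (Set.mem_univ i)).2.le]
  have hcpt : IsCompact (Set.Icc a b) := isCompact_Icc
  have hint : IntegrableOn w (Set.Icc a b) volume := hloc.integrableOn_isCompact hcpt
  calc wInt w (rect a b) ≤ wInt w (Set.Icc a b) := wInt_mono w hsub
    _ < ⊤ := hint.lintegral_lt_top

/-- Lemma C : the A∞-type estimate. -/
lemma ainfty {w : (Fin n → ℝ) → ℝ} (hloc : LocallyIntegrable w volume)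
    {B β γ : ℝ} (hB : 1 ≤ B) (hβ : 1 ≤ β) (hγ : 0 < γ)
    (htaub : ∀ α : ℝ, 1 - Real.exp (-γ) < α → α < 1 →
      CSw w α - 1 ≤ ENNReal.ofReal (B * (1 - α) ^ (1 / β)))
    {a b : Fin n → ℝ} (hab : ∀ i, a i < b i)
    {S : Set (Fin n → ℝ)} (hS : MeasurableSet S) (hSR : S ⊆ rect a b) :
    wInt w S ≤ ENNReal.ofReal ((max B (Real.exp (γ / β))) *
        ((volume S).toReal / (volume (rect a b)).toReal) ^ (1 / β)) *
      wInt w (rect a b) := by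
  set R := rect a b with hR
  set K : ℝ := max B (Real.exp (γ / β)) with hK
  have hK1 : 1 ≤ K := le_trans hB (le_max_left _ _)
  have hβ0 : 0 < β := lt_of_lt_of_le zero_lt_one hβ
  have hvpos : 0 < volume R := volume_rect_pos hab
  have hvfin : volume R < ⊤ := volume_rect_lt_top a b
  have hv : 0 < (volume R).toReal := ENNReal.toReal_pos hvpos.ne' hvfin.ne
  have hwfin : wInt w R < ⊤ := wInt_rect_lt_top hloc a b
  set v : ℝ := (volume R).toReal with hvdef
  set s : ℝ := (volume S).toReal with hsdef
  have hs0 : 0 ≤ s := ENNReal.toReal_nonneg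
  have hsv : s ≤ v := ENNReal.toReal_mono hvfin.ne (measure_mono hSR)
  set t : ℝ := s / v with htdef
  have ht0 : 0 ≤ t := div_nonneg hs0 hv.le
  by_cases hcase : Real.exp (-γ) ≤ t
  · -- trivial case
    have h1 : 1 ≤ K * t ^ (1 / β) := by
      have h2 : Real.exp (-γ) ^ (1 / β) ≤ t ^ (1 / β) :=
        Real.rpow_le_rpow (Real.exp_pos _).le hcase (by positivity)
      have h3 : Real.exp (-γ) ^ (1 / β) = Real.exp (-(γ / β)) := by
        rw [← Real.exp_mul]; ring_nf
      have h4 : Real.exp (γ / β) * Real.exp (-(γ / β)) = 1 := by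
        rw [← Real.exp_add]; ring_nf; exact Real.exp_zero
      calc (1:ℝ) = Real.exp (γ / β) * Real.exp (-(γ / β)) := h4.symm
        _ ≤ K * (Real.exp (-γ) ^ (1 / β)) := by
            rw [h3]; exact mul_le_mul_of_nonneg_right (le_max_right _ _) (Real.exp_pos _).le
        _ ≤ K * t ^ (1 / β) := mul_le_mul_of_nonneg_left h2 (by linarith)
    calc wInt w S ≤ wInt w R := wInt_mono w hSR
      _ = 1 * wInt w R := (one_mul _).symm
      _ ≤ ENNReal.ofReal (K * t ^ (1 / β)) * wInt w R := by
          exact mul_le_mul_left (by rwa [← ENNReal.ofReal_one, ENNReal.ofReal_le_ofReal_iff (by positivity)]) _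
  · push_neg at hcase
    -- main case : t < exp (-γ)
    have key : ∀ δ : ℝ, t < δ → δ < Real.exp (-γ) →
        wInt w S ≤ ENNReal.ofReal (B * δ ^ (1 / β)) * wInt w R := by
      intro δ hδ1 hδ2
      have hδ0 : 0 < δ := lt_of_le_of_lt ht0 hδ1
      set α : ℝ := 1 - δ with hα
      have hα1 : 1 - Real.exp (-γ) < α := by rw [hα]; linarith
      have hα2 : α < 1 := by rw [hα]; linarith
      have hα0 : 0 < α := by
        have : Real.exp (-γ) < 1 := Real.exp_lt_one_iff.mpr (by linarith)
        rw [hα]; linarith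
      set D : ℝ≥0∞ := ENNReal.ofReal (B * (1 - α) ^ (1 / β)) with hD
      have hDδ : D = ENNReal.ofReal (B * δ ^ (1 / β)) := by rw [hD, hα]; ring_nf
      have hDfin : D ≠ ⊤ := ENNReal.ofReal_ne_top
      have hsδv : s < δ * v := by
        rw [htdef, div_lt_iff₀ hv] at hδ1; linarith [hδ1]
      -- vol (R \ S)
      have hvolRS : (volume (R \ S)).toReal = v - s := by
        rw [measure_diff hSR hS.nullMeasurableSet
          (lt_of_le_of_lt (measure_mono hSR) hvfin).ne]
        rw [ENNReal.toReal_sub_of_le (measure_mono hSR) hvfin.ne]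
      -- first, the claim with an ε-room
      have claim : ∀ ε : ℝ≥0∞, 0 < ε → ε ≠ ⊤ →
          wInt w R ≤ (1 + D) * (wInt w (R \ S) + ε) := by
        intro ε hε hεtop
        by_cases hR0 : wInt w R = 0
        · rw [hR0]; exact zero_le
        have hbigvol : α * v < (volume ((R \ S) ∩ R)).toReal := by
          have : (R \ S) ∩ R = R \ S := Set.inter_eq_left.mpr Set.diff_subset
          rw [this, hvolRS, hα]
          nlinarith
        by_cases hRS0 : 0 < wInt w (R \ S)
        · -- use E = R \ S directly
          have h := tauberian_apply htaub hα1 hα2 hα0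
            ((measurableSet_rect a b).diff hS) hRS0
            (lt_of_le_of_lt (wInt_mono w Set.diff_subset) hwfin) hbigvol
          calc wInt w R ≤ (1 + D) * wInt w (R \ S) := h
            _ ≤ (1 + D) * (wInt w (R \ S) + ε) := by
                exact mul_le_mul_right le_self_add _
        · -- wInt (R \ S) = 0 ; select a small piece of S
          push_neg at hRS0
          have hRS0' : wInt w (R \ S) = 0 := le_antisymm hRS0 zero_le
          -- wInt S = wInt R > 0
          have hsum : wInt w S + wInt w (R \ S) = wInt w R := by
            rw [wInt_eq_withDensity w hS, wInt_eq_withDensity w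
              ((measurableSet_rect a b).diff hS), wInt_eq_withDensity w (measurableSet_rect a b)]
            have h := measure_inter_add_diff
              (μ := volume.withDensity fun x => ENNReal.ofReal (w x)) R hS
            rwa [Set.inter_eq_right.mpr hSR] at h
          have hwS : 0 < wInt w S := by
            rcases (zero_le : 0 ≤ wInt w S).lt_or_eq with h | h
            · exact h
            · exfalso; apply hR0; rw [← hsum, ← h, hRS0']; simp
          -- the space is nontrivial : get a coordinate
          have hSne : S.Nonempty := by
            by_contra h
            rw [Set.not_nonempty_iff_eq_empty] at h
            rw [h] at hwS
            simp [wInt] at hwS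
          have hRSne : (R \ S).Nonempty := by
            by_contra h
            rw [Set.not_nonempty_iff_eq_empty, Set.diff_eq_empty] at h
            have : v ≤ s := ENNReal.toReal_mono
              (lt_of_le_of_lt (measure_mono hSR) hvfin).ne (measure_mono h)
            nlinarith
          obtain ⟨x0, hx0⟩ := hSne
          obtain ⟨y0, hy0⟩ := hRSne
          have hxy : x0 ≠ y0 := fun h => hy0.2 (h ▸ hx0)
          obtain ⟨i0, _⟩ := Function.ne_iff.mp hxy
          obtain ⟨T, hTS, hTm, hT0, hTε⟩ := exists_small_subset i0 hS hwS
            (lt_of_le_of_lt (wInt_mono w hSR) hwfin) hε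
          set E : Set (Fin n → ℝ) := (R \ S) ∪ T with hE
          have hEm : MeasurableSet E := ((measurableSet_rect a b).diff hS).union hTm
          have hE0 : 0 < wInt w E := lt_of_lt_of_le hT0 (wInt_mono w Set.subset_union_right)
          have hEsum : wInt w E ≤ wInt w (R \ S) + wInt w T := by
            rw [wInt_eq_withDensity w hEm, wInt_eq_withDensity w
              ((measurableSet_rect a b).diff hS), wInt_eq_withDensity w hTm]
            exact measure_union_le _ _
          have hEfin : wInt w E < ⊤ := lt_of_le_of_lt hEsum
            (by rw [hRS0', zero_add]; exact lt_of_le_of_lt hTε hεtop.lt_top)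
          have hbigvol' : α * v < (volume (E ∩ R)).toReal := by
            refine lt_of_lt_of_le hbigvol (ENNReal.toReal_mono ?_ (measure_mono ?_))
            · exact (lt_of_le_of_lt (measure_mono Set.inter_subset_right) hvfin).ne
            · exact Set.inter_subset_inter_left _ Set.subset_union_left
          have h := tauberian_apply htaub hα1 hα2 hα0 hEm hE0 hEfin hbigvol'
          calc wInt w R ≤ (1 + D) * wInt w E := h
            _ ≤ (1 + D) * (wInt w (R \ S) + ε) := by
                refine mul_le_mul_right (hEsum.trans ?_) _
                exact add_le_add le_rfl hTε
      -- remove the ε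
      have hmain : wInt w R ≤ (1 + D) * wInt w (R \ S) := by
        refine ENNReal.le_of_forall_pos_le_add fun ε hε hlt => ?_
        have h1D : (1 : ℝ≥0∞) + D ≠ 0 := by simp
        have h1Dtop : (1 : ℝ≥0∞) + D ≠ ⊤ := by
          rw [hD]; exact ENNReal.add_ne_top.mpr ⟨ENNReal.one_ne_top, ENNReal.ofReal_ne_top⟩
        have hε' : (0:ℝ≥0∞) < (ε : ℝ≥0∞) / (1 + D) :=
          ENNReal.div_pos (by exact_mod_cast hε.ne') h1Dtop
        have hε'top : (ε : ℝ≥0∞) / (1 + D) ≠ ⊤ := by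
          exact (ENNReal.div_lt_top ENNReal.coe_ne_top h1D).ne
        have := claim _ hε' hε'top
        calc wInt w R ≤ (1 + D) * (wInt w (R \ S) + ε / (1 + D)) := this
          _ = (1 + D) * wInt w (R \ S) + (1 + D) * (ε / (1 + D)) := by rw [mul_add]
          _ = (1 + D) * wInt w (R \ S) + ε := by rw [ENNReal.mul_div_cancel h1D h1Dtop]
      -- cancel wInt (R \ S)
      have hsum : wInt w S + wInt w (R \ S) = wInt w R := by
        rw [wInt_eq_withDensity w hS, wInt_eq_withDensity w
          ((measurableSet_rect a b).diff hS), wInt_eq_withDensity w (measurableSet_rect a b)]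
        have h := measure_inter_add_diff
          (μ := volume.withDensity fun x => ENNReal.ofReal (w x)) R hS
        rwa [Set.inter_eq_right.mpr hSR] at h
      have hRSfin : wInt w (R \ S) ≠ ⊤ :=
        (lt_of_le_of_lt (wInt_mono w Set.diff_subset) hwfin).ne
      have hcancel : wInt w S ≤ D * wInt w (R \ S) := by
        have h2 : wInt w (R \ S) + wInt w S ≤ wInt w (R \ S) + D * wInt w (R \ S) := by
          rw [add_comm (wInt w (R \ S)) (wInt w S), hsum]
          calc wInt w R ≤ (1 + D) * wInt w (R \ S) := hmain
            _ = wInt w (R \ S) + D * wInt w (R \ S) := by rw [add_mul, one_mul]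
        exact (ENNReal.add_le_add_iff_left hRSfin).mp h2
      rw [hDδ] at hcancel
      exact hcancel.trans (mul_le_mul_right (wInt_mono w Set.diff_subset) _)
    -- pass to the limit δ → t⁺
    have htend : Filter.Tendsto (fun δ : ℝ => ENNReal.ofReal (B * δ ^ (1 / β)) * wInt w R)
        (nhdsWithin t (Set.Ioi t)) (nhds (ENNReal.ofReal (B * t ^ (1 / β)) * wInt w R)) := by
      have hc : ContinuousAt (fun δ : ℝ => B * δ ^ (1 / β)) t := by
        exact (continuousAt_const.mul (Real.continuousAt_rpow_const t (1/β)
          (Or.inr (by positivity))))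
      have hc2 : ContinuousAt (fun δ : ℝ => ENNReal.ofReal (B * δ ^ (1 / β))) t :=
        ENNReal.continuous_ofReal.continuousAt.comp hc
      exact ENNReal.Tendsto.mul_const ((hc2.tendsto).mono_left nhdsWithin_le_nhds)
        (Or.inr hwfin.ne)
    have hev : ∀ᶠ δ in nhdsWithin t (Set.Ioi t),
        wInt w S ≤ ENNReal.ofReal (B * δ ^ (1 / β)) * wInt w R := by
      filter_upwards [Ioo_mem_nhdsGT hcase] with δ hδ
      exact key δ hδ.1 hδ.2
    have hlim : wInt w S ≤ ENNReal.ofReal (B * t ^ (1 / β)) * wInt w R :=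
      ge_of_tendsto htend hev
    refine hlim.trans (mul_le_mul_left (ENNReal.ofReal_le_ofReal ?_) _)
    exact mul_le_mul_of_nonneg_right (le_max_left _ _) (by positivity)

end Stmt8

namespace Stmt8

/-- Lemma D : decay of the weighted distribution function. -/
lemma decay {w : (Fin n → ℝ) → ℝ} (hw : ∀ x, 0 ≤ w x) (hmeas : Measurable w)
    (hloc : LocallyIntegrable w volume)
    {B β γ : ℝ} (hB : 1 ≤ B) (hβ1 : 1 < β) (hγ : 0 < γ)
    (htaub : ∀ α : ℝ, 1 - Real.exp (-γ) < α → α < 1 →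
      CSw w α - 1 ≤ ENNReal.ofReal (B * (1 - α) ^ (1 / β)))
    {a b : Fin n → ℝ} (hab : ∀ i, a i < b i)
    {lam : ℝ} (hlam : 0 < lam) :
    (wInt w ({x | lam < w x} ∩ rect a b)).toReal ≤
      (max B (Real.exp (γ / β)) * (wInt w (rect a b)).toReal) ^ (β / (β - 1)) *
        (lam * (volume (rect a b)).toReal) ^ (-(1 / (β - 1))) := by
  set R := rect a b with hR
  set K : ℝ := max B (Real.exp (γ / β)) with hK
  have hK0 : 0 < K := lt_of_lt_of_le zero_lt_one (le_trans hB (le_max_left _ _))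
  have hβ0 : 0 < β := by linarith
  have hβ10 : 0 < β - 1 := by linarith
  set S : Set (Fin n → ℝ) := {x | lam < w x} ∩ R with hSdef
  have hSm : MeasurableSet S := (measurableSet_lt measurable_const hmeas).inter
    (measurableSet_rect a b)
  have hSR : S ⊆ R := Set.inter_subset_right
  have hwfin : wInt w R < ⊤ := wInt_rect_lt_top hloc a b
  have hSfin : wInt w S < ⊤ := lt_of_le_of_lt (wInt_mono w hSR) hwfin
  have hvpos : 0 < (volume R).toReal :=
    ENNReal.toReal_pos (volume_rect_pos hab).ne' (volume_rect_lt_top a b).ne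
  set v : ℝ := (volume R).toReal with hv
  set A : ℝ := (wInt w R).toReal with hA
  set m : ℝ := (wInt w S).toReal with hm
  set s : ℝ := (volume S).toReal with hs
  have hm0 : 0 ≤ m := ENNReal.toReal_nonneg
  have hA0 : 0 ≤ A := ENNReal.toReal_nonneg
  have hs0 : 0 ≤ s := ENNReal.toReal_nonneg
  -- Chebyshev : lam * s ≤ m
  have hcheb : lam * s ≤ m := by
    have h1 : ENNReal.ofReal lam * volume S ≤ wInt w S := by
      rw [wInt]
      calc ENNReal.ofReal lam * volume S = ∫⁻ _ in S, ENNReal.ofReal lam := by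
            rw [setLIntegral_const]
        _ ≤ ∫⁻ x in S, ENNReal.ofReal (w x) :=
            setLIntegral_mono (hmeas.ennreal_ofReal) fun x hx =>
              ENNReal.ofReal_le_ofReal (le_of_lt hx.1)
    have h2 := ENNReal.toReal_mono hSfin.ne h1
    rwa [ENNReal.toReal_mul, ENNReal.toReal_ofReal hlam.le] at h2
  -- A∞ estimate : m ≤ K * (s/v)^(1/β) * A
  have hainf : m ≤ K * (s / v) ^ (1 / β) * A := by
    have h1 := ainfty hloc hB hβ1.le hγ htaub hab hSm hSR
    have h2 := ENNReal.toReal_mono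
      (ENNReal.mul_lt_top ENNReal.ofReal_lt_top hwfin).ne h1
    rwa [ENNReal.toReal_mul, ENNReal.toReal_ofReal (by positivity)] at h2
  rcases hm0.lt_or_eq with hmpos | hmzero
  · -- main case m > 0
    have hvol_s : volume S ≠ ⊤ := (lt_of_le_of_lt (measure_mono hSR)
      (volume_rect_lt_top a b)).ne
    have hslem : s ≤ m / lam := by
      rw [le_div_iff₀ hlam]; linarith [hcheb]
    have step1 : m ≤ K * A * (m ^ (1/β) * (lam * v) ^ (-(1/β))) := by
      have h3 : (s / v) ^ (1/β) ≤ (m / (lam * v)) ^ (1/β) := by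
        apply Real.rpow_le_rpow (by positivity) ?_ (by positivity)
        rw [div_le_div_iff₀ hvpos (by positivity)]
        calc s * (lam * v) = (lam * s) * v := by ring
          _ ≤ m * v := by nlinarith
      have h4 : (m / (lam * v)) ^ (1/β) = m ^ (1/β) * (lam * v) ^ (-(1/β)) := by
        rw [Real.div_rpow hm0 (by positivity), Real.rpow_neg (by positivity),
          div_eq_mul_inv]
      calc m ≤ K * (s / v) ^ (1 / β) * A := hainf
        _ ≤ K * (m / (lam * v)) ^ (1/β) * A := by
            refine mul_le_mul_of_nonneg_right (mul_le_mul_of_nonneg_left h3 hK0.le) hA0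
        _ = K * A * (m ^ (1/β) * (lam * v) ^ (-(1/β))) := by rw [h4]; ring
    -- divide by m^(1/β)
    have hmp : 0 < m ^ (1/β) := Real.rpow_pos_of_pos hmpos _
    have step2 : m ^ (1 - 1/β) ≤ K * A * (lam * v) ^ (-(1/β)) := by
      have h5 : m ^ (1 - 1/β) * m ^ (1/β) = m := by
        rw [← Real.rpow_add hmpos]; norm_num
      rw [← mul_le_mul_iff_left₀ hmp, h5]
      calc m ≤ K * A * (m ^ (1/β) * (lam * v) ^ (-(1/β))) := step1
        _ = K * A * (lam * v) ^ (-(1/β)) * m ^ (1/β) := by ring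
    -- raise to the power β' = β/(β-1)
    have hexp : (1 - 1/β) * (β / (β-1)) = 1 := by field_simp
    have step3 : m ≤ (K * A * (lam * v) ^ (-(1/β))) ^ (β / (β-1)) := by
      have h6 : m = (m ^ (1 - 1/β)) ^ (β / (β-1)) := by
        rw [← Real.rpow_mul hm0, hexp, Real.rpow_one]
      rw [h6]
      exact Real.rpow_le_rpow (by positivity) step2 (by positivity)
    refine step3.trans (le_of_eq ?_)
    rw [Real.mul_rpow (by positivity) (by positivity),
      ← Real.rpow_mul (by positivity) (-(1/β)) (β / (β-1))]
    congr 1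
    rw [neg_mul]
    congr 1
    field_simp
  · rw [← hmzero]
    positivity

end Stmt8

namespace Stmt8

/-- Real algebra: the crossover identity. -/
lemma crossover {K A v r β : ℝ} (hK : 0 < K) (hA : 0 < A) (hv : 0 < v)
    (hβ1 : 1 < β) :
    (K * A) ^ (β / (β - 1)) * v ^ (-(1 / (β - 1))) *
      (K ^ β * A / v) ^ (r - β / (β - 1)) = A * (K ^ β * A / v) ^ (r - 1) := by
  have hβ10 : 0 < β - 1 := by linarith
  have hlam : 0 < K ^ β * A / v := by positivity
  have hKA : 0 < K * A := by positivity
  have hL : Real.log ((K * A) ^ (β / (β - 1)) * v ^ (-(1 / (β - 1))) *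
      (K ^ β * A / v) ^ (r - β / (β - 1))) =
      Real.log (A * (K ^ β * A / v) ^ (r - 1)) := by
    rw [Real.log_mul (by positivity) (by positivity),
      Real.log_mul (by positivity) (by positivity),
      Real.log_mul (by positivity) (by positivity),
      Real.log_rpow hKA, Real.log_rpow hv, Real.log_rpow hlam, Real.log_rpow hlam,
      Real.log_mul hK.ne' hA.ne',
      Real.log_div (by positivity : (0:ℝ) < K ^ β * A).ne' hv.ne',
      Real.log_mul (by positivity : (0:ℝ) < K ^ β).ne' hA.ne', Real.log_rpow hK]
    field_simp
    ring
  have h1 : (0:ℝ) < (K * A) ^ (β / (β - 1)) * v ^ (-(1 / (β - 1))) *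
      (K ^ β * A / v) ^ (r - β / (β - 1)) := by positivity
  have h2 : (0:ℝ) < A * (K ^ β * A / v) ^ (r - 1) := by positivity
  rw [← Real.exp_log h1, ← Real.exp_log h2, hL]

end Stmt8

namespace Stmt8

/-- Lemma E : bound on the lintegral of `w ^ r` via the layer cake formula. -/
lemma lintegral_rpow_bound {w : (Fin n → ℝ) → ℝ} (hw : ∀ x, 0 ≤ w x)
    (hmeas : Measurable w) (hloc : LocallyIntegrable w volume)
    {B β γ : ℝ} (hB : 1 ≤ B) (hβ1 : 1 < β) (hγ : 0 < γ)
    (htaub : ∀ α : ℝ, 1 - Real.exp (-γ) < α → α < 1 →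
      CSw w α - 1 ≤ ENNReal.ofReal (B * (1 - α) ^ (1 / β)))
    {a b : Fin n → ℝ} (hab : ∀ i, a i < b i)
    {r : ℝ} (hr1 : 1 < r) (hr2 : r < β / (β - 1))
    (hApos : 0 < (wInt w (rect a b)).toReal) :
    ∫⁻ x in rect a b, ENNReal.ofReal (w x ^ r) ≤
      ENNReal.ofReal ((wInt w (rect a b)).toReal *
        (max B (Real.exp (γ / β)) ^ β * (wInt w (rect a b)).toReal /
          (volume (rect a b)).toReal) ^ (r - 1) *
        ((β / (β - 1) - 1) / (β / (β - 1) - r))) := by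
  set R := rect a b with hRdef
  set K : ℝ := max B (Real.exp (γ / β)) with hKdef
  have hK0 : 0 < K := lt_of_lt_of_le zero_lt_one (le_trans hB (le_max_left _ _))
  have hβ10 : 0 < β - 1 := by linarith
  set β' : ℝ := β / (β - 1) with hβ'def
  have hβ'r : r < β' := hr2
  have hβ'1 : 1 < β' := lt_trans hr1 hr2
  have hβ'eq : β' - 1 = 1 / (β - 1) := by rw [hβ'def]; field_simp; ring
  have hvpos : 0 < (volume R).toReal :=
    ENNReal.toReal_pos (volume_rect_pos hab).ne' (volume_rect_lt_top a b).ne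
  set v : ℝ := (volume R).toReal with hv
  set A : ℝ := (wInt w R).toReal with hA
  have hwfin : wInt w R < ⊤ := wInt_rect_lt_top hloc a b
  have hwR : wInt w R = ENNReal.ofReal A := (ENNReal.ofReal_toReal hwfin.ne).symm
  set lam0 : ℝ := K ^ β * A / v with hlam0def
  have hlam0 : 0 < lam0 := by positivity
  -- the weighted measure on R
  set μR : Measure (Fin n → ℝ) :=
    (volume.restrict R).withDensity (fun x => ENNReal.ofReal (w x)) with hμR
  have hμRapp : ∀ t : ℝ, μR {x | t < w x} = wInt w ({x | t < w x} ∩ R) := by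
    intro t
    have hU : MeasurableSet {x | t < w x} := measurableSet_lt measurable_const hmeas
    rw [hμR, withDensity_apply _ hU, wInt, Measure.restrict_restrict hU]
  -- step 1 : rewrite the integral against μR
  have step1 : ∫⁻ x in R, ENNReal.ofReal (w x ^ r) =
      ∫⁻ x, ENNReal.ofReal (w x ^ (r - 1)) ∂μR := by
    rw [hμR, lintegral_withDensity_eq_lintegral_mul _ hmeas.ennreal_ofReal
      (hmeas.pow_const (r - 1)).ennreal_ofReal]
    refine lintegral_congr fun x => ?_
    simp only [Pi.mul_apply]
    rcases (hw x).lt_or_eq with hx | hx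
    · rw [← ENNReal.ofReal_mul (hw x)]
      congr 1
      have h1 : w x ^ r = w x ^ (1 + (r - 1)) := by norm_num
      rw [h1, Real.rpow_add hx, Real.rpow_one]
    · rw [← hx]
      rw [Real.zero_rpow (by linarith), Real.zero_rpow (by linarith)]
      simp
  -- step 2 : layer cake
  have step2 : ∫⁻ x, ENNReal.ofReal (w x ^ (r - 1)) ∂μR =
      ENNReal.ofReal (r - 1) *
        ∫⁻ t in Set.Ioi (0:ℝ), μR {x | t < w x} * ENNReal.ofReal (t ^ (r - 1 - 1)) :=
    lintegral_rpow_eq_lintegral_meas_lt_mul μR (Filter.Eventually.of_forall hw)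
      hmeas.aemeasurable (by linarith)
  have hA0 : (0:ℝ) ≤ A := hApos.le
  -- split the t-integral
  have hsplit : Set.Ioi (0:ℝ) = Set.Ioc 0 lam0 ∪ Set.Ioi lam0 :=
    (Set.Ioc_union_Ioi_eq_Ioi hlam0.le).symm
  have hIunion : ∫⁻ t in Set.Ioi (0:ℝ), μR {x | t < w x} * ENNReal.ofReal (t ^ (r - 1 - 1)) =
      (∫⁻ t in Set.Ioc 0 lam0, μR {x | t < w x} * ENNReal.ofReal (t ^ (r - 1 - 1))) +
      (∫⁻ t in Set.Ioi lam0, μR {x | t < w x} * ENNReal.ofReal (t ^ (r - 1 - 1))) := by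
    rw [hsplit, lintegral_union measurableSet_Ioi (Set.Ioc_disjoint_Ioi le_rfl)]
  -- the elementary integral on (0, lam0]
  have hJc : ∫⁻ t in Set.Ioc 0 lam0, ENNReal.ofReal (t ^ (r - 1 - 1)) =
      ENNReal.ofReal (lam0 ^ (r - 1) / (r - 1)) := by
    have hint : IntegrableOn (fun t : ℝ => t ^ (r - 1 - 1)) (Set.Ioc 0 lam0) volume :=
      (intervalIntegral.intervalIntegrable_rpow' (a := 0) (b := lam0)
        (by linarith : (-1:ℝ) < r - 1 - 1)).1
    rw [← MeasureTheory.ofReal_integral_eq_lintegral_ofReal hint ?nn]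
    case nn =>
      filter_upwards [self_mem_ae_restrict measurableSet_Ioc] with t ht using
        Real.rpow_nonneg ht.1.le _
    congr 1
    rw [← intervalIntegral.integral_of_le hlam0.le,
      integral_rpow (Or.inl (by linarith : (-1:ℝ) < r - 1 - 1))]
    have he : r - 1 - 1 + 1 = r - 1 := by ring
    rw [he, Real.zero_rpow (by linarith : r - 1 ≠ 0)]
    ring
  have hI1 : (∫⁻ t in Set.Ioc 0 lam0, μR {x | t < w x} * ENNReal.ofReal (t ^ (r - 1 - 1))) ≤
      ENNReal.ofReal (A * (lam0 ^ (r - 1) / (r - 1))) := by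
    have hb : ∀ t : ℝ, μR {x | t < w x} * ENNReal.ofReal (t ^ (r - 1 - 1)) ≤
        ENNReal.ofReal A * ENNReal.ofReal (t ^ (r - 1 - 1)) := fun t => by
      refine mul_le_mul_left ?_ _
      rw [hμRapp t, ← hwR]
      exact wInt_mono w Set.inter_subset_right
    calc (∫⁻ t in Set.Ioc 0 lam0, μR {x | t < w x} * ENNReal.ofReal (t ^ (r - 1 - 1)))
        ≤ ∫⁻ t in Set.Ioc 0 lam0, ENNReal.ofReal A * ENNReal.ofReal (t ^ (r - 1 - 1)) :=
          lintegral_mono fun t => hb t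
      _ = ENNReal.ofReal A * ∫⁻ t in Set.Ioc 0 lam0, ENNReal.ofReal (t ^ (r - 1 - 1)) :=
          lintegral_const_mul' _ _ ENNReal.ofReal_ne_top
      _ = ENNReal.ofReal A * ENNReal.ofReal (lam0 ^ (r - 1) / (r - 1)) := by rw [hJc]
      _ = ENNReal.ofReal (A * (lam0 ^ (r - 1) / (r - 1))) := (ENNReal.ofReal_mul hA0).symm
  -- the tail integral
  set q : ℝ := r - 1 - 1 - 1 / (β - 1) with hqdef
  have hq : q < -1 := by
    have h1 : r < 1 + 1 / (β - 1) := by linarith [hβ'eq, hβ'r]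
    rw [hqdef]; linarith
  set C2 : ℝ := (K * A) ^ β' * v ^ (-(1 / (β - 1))) with hC2def
  have hC2pos : 0 < C2 := by positivity
  have hI2 : (∫⁻ t in Set.Ioi lam0, μR {x | t < w x} * ENNReal.ofReal (t ^ (r - 1 - 1))) ≤
      ENNReal.ofReal (A * (lam0 ^ (r - 1) / (β' - r))) := by
    have hb : ∀ t ∈ Set.Ioi lam0, μR {x | t < w x} * ENNReal.ofReal (t ^ (r - 1 - 1)) ≤
        ENNReal.ofReal (C2 * t ^ q) := by
      intro t ht
      have ht0 : 0 < t := lt_trans hlam0 ht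
      have hdec := decay hw hmeas hloc hB hβ1 hγ htaub hab ht0
      have hfin : wInt w ({x | t < w x} ∩ R) < ⊤ :=
        lt_of_le_of_lt (wInt_mono w Set.inter_subset_right) hwfin
      rw [hμRapp t, ← ENNReal.ofReal_toReal hfin.ne,
        ← ENNReal.ofReal_mul ENNReal.toReal_nonneg]
      refine ENNReal.ofReal_le_ofReal ?_
      calc (wInt w ({x | t < w x} ∩ R)).toReal * t ^ (r - 1 - 1)
          ≤ ((K * A) ^ (β / (β - 1)) * (t * v) ^ (-(1 / (β - 1)))) * t ^ (r - 1 - 1) := by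
            refine mul_le_mul_of_nonneg_right ?_ (Real.rpow_nonneg ht0.le _)
            exact hdec
        _ = C2 * t ^ q := by
            rw [Real.mul_rpow ht0.le hvpos.le, hC2def, hqdef]
            have h2 : t ^ (-(1 / (β - 1))) * t ^ (r - 1 - 1) = t ^ (r - 1 - 1 - 1 / (β - 1)) := by
              rw [← Real.rpow_add ht0]; ring_nf
            rw [hβ'def]
            calc (K * A) ^ (β / (β - 1)) * (t ^ (-(1 / (β - 1))) * v ^ (-(1 / (β - 1)))) *
                  t ^ (r - 1 - 1)
                = (K * A) ^ (β / (β - 1)) * v ^ (-(1 / (β - 1))) *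
                  (t ^ (-(1 / (β - 1))) * t ^ (r - 1 - 1)) := by ring
              _ = (K * A) ^ (β / (β - 1)) * v ^ (-(1 / (β - 1))) *
                  t ^ (r - 1 - 1 - 1 / (β - 1)) := by rw [h2]
    have hintq : IntegrableOn (fun t : ℝ => C2 * t ^ q) (Set.Ioi lam0) volume :=
      (integrableOn_Ioi_rpow_of_lt hq hlam0).const_mul C2
    calc (∫⁻ t in Set.Ioi lam0, μR {x | t < w x} * ENNReal.ofReal (t ^ (r - 1 - 1)))
        ≤ ∫⁻ t in Set.Ioi lam0, ENNReal.ofReal (C2 * t ^ q) :=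
          setLIntegral_mono (((measurable_id.pow_const q).const_mul C2).ennreal_ofReal) hb
      _ = ENNReal.ofReal (∫ t in Set.Ioi lam0, C2 * t ^ q) := by
          rw [← MeasureTheory.ofReal_integral_eq_lintegral_ofReal hintq ?nn2]
          case nn2 =>
            filter_upwards [self_mem_ae_restrict measurableSet_Ioi] with t ht
            have ht0 : 0 < t := lt_trans hlam0 ht
            positivity
      _ = ENNReal.ofReal (C2 * (-lam0 ^ (q + 1) / (q + 1))) := by
          rw [MeasureTheory.integral_const_mul, integral_Ioi_rpow_of_lt hq hlam0]
      _ = ENNReal.ofReal (A * (lam0 ^ (r - 1) / (β' - r))) := by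
          congr 1
          have hq1 : q + 1 = r - β' := by rw [hqdef]; linarith [hβ'eq]
          have hcross := crossover (r := r) (v := v) (β := β) hK0 hApos hvpos hβ1
          rw [hq1]
          have hC2l : C2 * lam0 ^ (r - β') = A * lam0 ^ (r - 1) := by
            rw [hC2def, hβ'def, hlam0def]
            exact hcross
          have hneq : -lam0 ^ (r - β') / (r - β') = lam0 ^ (r - β') / (β' - r) := by
            rw [neg_div, ← div_neg]; ring_nf
          rw [hneq, ← mul_div_assoc, hC2l, mul_div_assoc]
  -- put everything together
  rw [step1, step2, hIunion]
  have hfinal : ENNReal.ofReal (r - 1) *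
      (ENNReal.ofReal (A * (lam0 ^ (r - 1) / (r - 1))) +
        ENNReal.ofReal (A * (lam0 ^ (r - 1) / (β' - r)))) =
      ENNReal.ofReal (A * lam0 ^ (r - 1) * ((β' - 1) / (β' - r))) := by
    rw [← ENNReal.ofReal_add
        (mul_nonneg hA0 (div_nonneg (Real.rpow_nonneg hlam0.le _) (by linarith)))
        (mul_nonneg hA0 (div_nonneg (Real.rpow_nonneg hlam0.le _) (by linarith))),
      ← ENNReal.ofReal_mul (by linarith : (0:ℝ) ≤ r - 1)]
    congr 1
    have hr10 : r - 1 ≠ 0 := by linarith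
    have hβ'r0 : β' - r ≠ 0 := by linarith
    field_simp
    ring
  calc ENNReal.ofReal (r - 1) *
      ((∫⁻ t in Set.Ioc 0 lam0, μR {x | t < w x} * ENNReal.ofReal (t ^ (r - 1 - 1))) +
        (∫⁻ t in Set.Ioi lam0, μR {x | t < w x} * ENNReal.ofReal (t ^ (r - 1 - 1))))
      ≤ ENNReal.ofReal (r - 1) *
        (ENNReal.ofReal (A * (lam0 ^ (r - 1) / (r - 1))) +
          ENNReal.ofReal (A * (lam0 ^ (r - 1) / (β' - r)))) :=
        mul_le_mul_right (add_le_add hI1 hI2) _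
    _ = ENNReal.ofReal (A * lam0 ^ (r - 1) * ((β' - 1) / (β' - r))) := hfinal
    _ = ENNReal.ofReal (A * (K ^ β * A / v) ^ (r - 1) * ((β / (β - 1) - 1) / (β / (β - 1) - r))) := by
        rw [hβ'def, hlam0def]

end Stmt8

/-- a weighted Solyanik estimate for the strong maximal operator implies
a reverse Hölder inequality on rectangles. -/
theorem stmt8 {n : ℕ} (w : (Fin n → ℝ) → ℝ) (hw : ∀ x, 0 ≤ w x) (hmeas : Measurable w)
    (hloc : LocallyIntegrable w volume)
    (B β γ : ℝ) (hB : 1 ≤ B) (hβ : 1 ≤ β) (hγ : 0 < γ)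
    (htaub : ∀ α : ℝ, 1 - Real.exp (-γ) < α → α < 1 →
      CSw w α - 1 ≤ ENNReal.ofReal (B * (1 - α) ^ (1 / β))) :
    ∀ a b : Fin n → ℝ, (∀ i, a i < b i) →
      ∀ r r' : ℝ, 1 < r → r < β / (β - 1) → 1 / r + 1 / r' = 1 →
        ((volume (rect a b)).toReal⁻¹ * ∫ x in rect a b, w x ^ r) ^ (1 / r) ≤
          (max B (Real.exp (γ / β))) ^ (β / r') *
            ((β / (β - 1) - 1) / (β / (β - 1) - r)) ^ (1 / r) *
            ((volume (rect a b)).toReal⁻¹ * ∫ x in rect a b, w x) := by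
  intro a b hab r r' hr1 hr2 hrr'
  have hβ1 : 1 < β := by
    rcases lt_or_eq_of_le hβ with h | h
    · exact h
    · exfalso
      rw [← h] at hr2
      norm_num at hr2
      linarith
  have hβ10 : 0 < β - 1 := by linarith
  set R := rect a b with hRdef
  set K : ℝ := max B (Real.exp (γ / β)) with hKdef
  have hK0 : 0 < K := lt_of_lt_of_le zero_lt_one (le_trans hB (le_max_left _ _))
  set β' : ℝ := β / (β - 1) with hβ'def
  have hβ'r : r < β' := hr2
  have hβ'1 : 1 < β' := lt_trans hr1 hr2
  have hcβ : 0 ≤ (β' - 1) / (β' - r) := div_nonneg (by linarith) (by linarith)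
  have hvpos : 0 < (volume R).toReal :=
    ENNReal.toReal_pos (Stmt8.volume_rect_pos hab).ne' (Stmt8.volume_rect_lt_top a b).ne
  set v : ℝ := (volume R).toReal with hv
  have hwfin : wInt w R < ⊤ := Stmt8.wInt_rect_lt_top hloc a b
  set A : ℝ := (wInt w R).toReal with hA
  have hA0 : 0 ≤ A := ENNReal.toReal_nonneg
  -- identify the Bochner integrals
  have hint_w : ∫ x in R, w x = A := by
    rw [MeasureTheory.integral_eq_lintegral_of_nonneg_ae
      (Filter.Eventually.of_forall fun x => hw x) hmeas.aestronglyMeasurable.restrict]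
    rfl
  have hint_wr : ∫ x in R, w x ^ r = (∫⁻ x in R, ENNReal.ofReal (w x ^ r)).toReal := by
    rw [MeasureTheory.integral_eq_lintegral_of_nonneg_ae
      (Filter.Eventually.of_forall fun x => Real.rpow_nonneg (hw x) r)
      (hmeas.pow_const r).aestronglyMeasurable.restrict]
  have hr0 : (0:ℝ) < r := by linarith
  rcases hA0.lt_or_eq with hApos | hAzero
  · -- main case
    set lam0 : ℝ := K ^ β * A / v with hlam0def
    have hlam0 : 0 < lam0 := by positivity
    have hbound := Stmt8.lintegral_rpow_bound hw hmeas hloc hB hβ1 hγ htaub hab hr1 hr2 hApos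
    have hJnn : (0:ℝ) ≤ A * lam0 ^ (r - 1) * ((β' - 1) / (β' - r)) := by
      have := Real.rpow_nonneg hlam0.le (r - 1)
      positivity
    have hJle : (∫⁻ x in R, ENNReal.ofReal (w x ^ r)).toReal ≤
        A * lam0 ^ (r - 1) * ((β' - 1) / (β' - r)) := by
      have h2 := ENNReal.toReal_mono ENNReal.ofReal_ne_top hbound
      rwa [ENNReal.toReal_ofReal hJnn] at h2
    -- the real computation
    have hstep : v⁻¹ * (A * lam0 ^ (r - 1) * ((β' - 1) / (β' - r))) =
        K ^ (β * (r - 1)) * (A / v) ^ r * ((β' - 1) / (β' - r)) := by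
      have h3 : lam0 ^ (r - 1) = K ^ (β * (r - 1)) * (A / v) ^ (r - 1) := by
        rw [hlam0def]
        rw [show K ^ β * A / v = K ^ β * (A / v) by ring]
        rw [Real.mul_rpow (by positivity) (by positivity), ← Real.rpow_mul hK0.le]
      have h4 : (A / v) ^ r = (A / v) * (A / v) ^ (r - 1) := by
        nth_rewrite 1 [show r = 1 + (r - 1) by ring]
        rw [Real.rpow_add (by positivity), Real.rpow_one]
      rw [h3, h4]
      field_simp
    have hrinv : r * (1 / r) = 1 := by field_simp
    have hmono : (v⁻¹ * ∫ x in R, w x ^ r) ^ (1 / r) ≤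
        (K ^ (β * (r - 1)) * (A / v) ^ r * ((β' - 1) / (β' - r))) ^ (1 / r) := by
      rw [← hstep]
      refine Real.rpow_le_rpow (mul_nonneg (inv_nonneg.mpr hvpos.le)
        (MeasureTheory.integral_nonneg fun x => Real.rpow_nonneg (hw x) r)) ?_ (by positivity)
      rw [hint_wr]
      exact mul_le_mul_of_nonneg_left hJle (by positivity)
    have hsplit : (K ^ (β * (r - 1)) * (A / v) ^ r * ((β' - 1) / (β' - r))) ^ (1 / r) =
        K ^ (β * (r - 1) * (1 / r)) * (A / v) * ((β' - 1) / (β' - r)) ^ (1 / r) := by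
      rw [Real.mul_rpow (by positivity) hcβ,
        Real.mul_rpow (by positivity) (by positivity),
        ← Real.rpow_mul hK0.le, ← Real.rpow_mul (by positivity), hrinv, Real.rpow_one]
    -- β * (r-1) * (1/r) = β / r'
    have hr'0 : r' ≠ 0 := by
      intro h
      rw [h] at hrr'
      simp at hrr'
      linarith
    have hexp : β * (r - 1) * (1 / r) = β / r' := by
      have h5 : 1 / r' = (r - 1) / r := by
        field_simp at hrr' ⊢
        linarith
      rw [div_eq_mul_inv β r', ← one_div r', h5]
      field_simp
    calc (v⁻¹ * ∫ x in R, w x ^ r) ^ (1 / r)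
        ≤ (K ^ (β * (r - 1)) * (A / v) ^ r * ((β' - 1) / (β' - r))) ^ (1 / r) := hmono
      _ = K ^ (β * (r - 1) * (1 / r)) * (A / v) * ((β' - 1) / (β' - r)) ^ (1 / r) := hsplit
      _ = K ^ (β / r') * ((β' - 1) / (β' - r)) ^ (1 / r) * (v⁻¹ * ∫ x in R, w x) := by
          rw [hexp, hint_w]
          field_simp
  · -- degenerate case : A = 0
    have hR0 : wInt w R = 0 := by
      rw [← ENNReal.ofReal_toReal hwfin.ne, ← hA, ← hAzero]
      simp
    have hae : (fun x => ENNReal.ofReal (w x)) =ᵐ[volume.restrict R] 0 :=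
      (lintegral_eq_zero_iff hmeas.ennreal_ofReal).mp hR0
    have haer : (fun x => w x ^ r) =ᵐ[volume.restrict R] 0 := by
      filter_upwards [hae] with x hx
      have : w x = 0 := le_antisymm (by simpa using hx) (hw x)
      simp [this, Real.zero_rpow (by linarith : r ≠ 0)]
    have hzero : ∫ x in R, w x ^ r = 0 := by
      rw [MeasureTheory.integral_congr_ae haer]
      simp
    rw [hzero, hint_w, ← hAzero, mul_zero, mul_zero,
      Real.zero_rpow (by positivity : 1 / r ≠ 0)]
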